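/- arXiv:math/0701174 — 4 statements merged into one kernel-verified Lean document; each statement's English description precedes it below -/
import Mathlib

section
/- Let u ≥ 0, ε ≥ 0, z > 0 with (u,ε) ≠ (0,0) or z > 0. Then (1/(2π)) ∫₀^{2π} log(u² + ε² + z² + 2uz·cos θ) dθ ≥ max(log(u² + ε²), log z²). -/
open Real MeasureTheory Filter

noncomputable def frr (r : ℝ) (θ : ℝ) : ℝ := Real.log (1 - 2*r*Real.cos θ + r^2)

lemma frr_periodic (r : ℝ) : Function.Periodic (frr r) (2*π) := by
  intro θ; simp [frr, Real.cos_add_two_pi]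

lemma frr_meas (r : ℝ) : Measurable (frr r) := by
  apply Real.measurable_log.comp; fun_prop

lemma pos2 {c : ℝ} (hc : |c| < 1) (r : ℝ) : 0 < 1 - 2*r*c + r^2 := by
  obtain ⟨h1, h2⟩ := abs_lt.mp hc
  nlinarith [sq_nonneg (r - c), mul_pos (show (0:ℝ) < 1 - c by linarith)
    (show (0:ℝ) < 1 + c by linarith)]

lemma pos1 {r : ℝ} (hr : |r| < 1) (θ : ℝ) : 0 < 1 - 2*r*Real.cos θ + r^2 := by
  obtain ⟨h1, h2⟩ := abs_lt.mp hr
  have hc1 := Real.neg_one_le_cos θ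
  have hc2 := Real.cos_le_one θ
  have hp1 : 0 < (1+r)^2 := pow_pos (by linarith) 2
  have hp2 : 0 < (1-r)^2 := pow_pos (by linarith) 2
  rcases le_total (Real.cos θ) 0 with h | h
  · nlinarith [mul_nonneg (show (0:ℝ) ≤ 1 + Real.cos θ by linarith) (sq_nonneg (1-r)),
      mul_nonneg (show (0:ℝ) ≤ -Real.cos θ by linarith) (sq_nonneg (1+r))]
  · nlinarith [mul_nonneg (show (0:ℝ) ≤ 1 - Real.cos θ by linarith) (sq_nonneg (1+r)),
      mul_nonneg (show (0:ℝ) ≤ Real.cos θ by linarith) (sq_nonneg (1-r))]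

lemma abs_cos_lt {θ : ℝ} (h0 : 0 < θ) (h1 : θ < 2*π) (h2 : θ ≠ π) : |Real.cos θ| < 1 := by
  have hπ := Real.pi_pos
  have hc1 : Real.cos θ ≠ 1 := by
    intro h
    obtain ⟨n, hn⟩ := (Real.cos_eq_one_iff θ).mp h
    have hn0 : (0:ℤ) < n := by
      by_contra hh
      push_neg at hh
      have : (n:ℝ) ≤ 0 := by exact_mod_cast hh
      nlinarith
    have : (1:ℝ) ≤ (n:ℝ) := by exact_mod_cast hn0
    nlinarith
  have hcm : Real.cos θ ≠ -1 := by
    intro h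
    have h' : Real.cos (θ - π) = 1 := by rw [Real.cos_sub_pi, h]; norm_num
    obtain ⟨n, hn⟩ := (Real.cos_eq_one_iff _).mp h'
    rcases lt_trichotomy n 0 with hh | hh | hh
    · have : (n:ℝ) ≤ -1 := by exact_mod_cast (by omega : n ≤ -1)
      nlinarith
    · rw [hh] at hn
      push_cast at hn
      exact h2 (by linarith)
    · have : (1:ℝ) ≤ (n:ℝ) := by exact_mod_cast hh
      nlinarith
  rw [abs_lt]
  exact ⟨lt_of_le_of_ne (Real.neg_one_le_cos θ) (Ne.symm hcm),
    lt_of_le_of_ne (Real.cos_le_one θ) hc1⟩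

lemma intlog01 : IntervalIntegrable Real.log volume 0 1 := by
  have hint : IntervalIntegrable (fun x : ℝ => 2 * x ^ (-(2:ℝ)⁻¹)) volume 0 1 :=
    (intervalIntegral.intervalIntegrable_rpow' (by norm_num)).const_mul 2
  apply hint.mono_fun' Real.measurable_log.aestronglyMeasurable
  rw [Set.uIoc_of_le (by norm_num : (0:ℝ) ≤ 1)]
  filter_upwards [ae_restrict_mem measurableSet_Ioc] with x hx
  obtain ⟨hx0, hx1⟩ := hx
  have hlog : Real.log x ≤ 0 := Real.log_nonpos hx0.le hx1
  have h1 : -Real.log x = 2 * Real.log (x ^ (-(2:ℝ)⁻¹)) := by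
    rw [Real.log_rpow hx0]; ring
  have h2 : Real.log (x ^ (-(2:ℝ)⁻¹)) ≤ x ^ (-(2:ℝ)⁻¹) - 1 :=
    Real.log_le_sub_one_of_pos (Real.rpow_pos_of_pos hx0 _)
  have h3 : 0 < x ^ (-(2:ℝ)⁻¹) := Real.rpow_pos_of_pos hx0 _
  simp only [Real.norm_eq_abs, abs_of_nonpos hlog]
  linarith

lemma intlog0pi : IntervalIntegrable Real.log volume 0 π := by
  apply intlog01.trans
  apply intervalIntegral.intervalIntegrable_log
  rw [Set.uIcc_of_le (by nlinarith [Real.pi_gt_three] : (1:ℝ) ≤ π)]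
  rintro ⟨h, -⟩
  norm_num at h

lemma frr_one_eq (θ : ℝ) : frr 1 θ = Real.log (2 - 2*Real.cos θ) := by
  simp only [frr]
  norm_num
  ring_nf

lemma int1a : IntervalIntegrable (frr 1) volume 0 π := by
  have hπ := Real.pi_pos
  have hmaj : IntervalIntegrable (fun θ : ℝ => 2*|Real.log θ| + 2*Real.log π) volume 0 π :=
    (intlog0pi.abs.const_mul 2).add intervalIntegrable_const
  apply hmaj.mono_fun' ((frr_meas 1).aestronglyMeasurable)
  rw [Set.uIoc_of_le hπ.le]
  filter_upwards [ae_restrict_mem measurableSet_Ioc] with θ hθ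
  obtain ⟨hθ0, hθπ⟩ := hθ
  have hub := Real.cos_le_one_sub_mul_cos_sq (x := θ) (by rw [abs_of_pos hθ0]; exact hθπ)
  have h4 : 2/π^2*θ^2 ≤ 1 - Real.cos θ := by linarith
  have h5 : 2*θ^2 ≤ (1 - Real.cos θ)*π^2 := by
    rw [div_mul_eq_mul_div, div_le_iff₀ (by positivity)] at h4
    linarith
  have hlow : θ^2/π^2 ≤ 2 - 2*Real.cos θ := by
    rw [div_le_iff₀ (by positivity)]
    nlinarith [sq_nonneg θ]
  have hposx : 0 < 2 - 2*Real.cos θ := lt_of_lt_of_le (by positivity) hlow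
  have hub2 : 2 - 2*Real.cos θ ≤ 4 := by nlinarith [Real.neg_one_le_cos θ]
  rw [Real.norm_eq_abs, frr_one_eq, abs_le]
  constructor
  · have hl1 : Real.log (θ^2/π^2) ≤ Real.log (2 - 2*Real.cos θ) :=
      Real.log_le_log (by positivity) hlow
    have e : Real.log (θ^2/π^2) = 2*Real.log θ - 2*Real.log π := by
      rw [Real.log_div (by positivity) (by positivity), Real.log_pow, Real.log_pow]
      push_cast; ring
    have := neg_abs_le (Real.log θ)
    linarith
  · have h6 : Real.log (2 - 2*Real.cos θ) ≤ Real.log 4 := Real.log_le_log hposx hub2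
    have h7 : Real.log 4 ≤ 2*Real.log π := by
      have he : Real.log 4 = 2*Real.log 2 := by
        rw [show (4:ℝ) = 2^2 by norm_num, Real.log_pow]; push_cast; ring
      have := Real.log_le_log (by norm_num : (0:ℝ) < 2)
        (by nlinarith [Real.pi_gt_three] : (2:ℝ) ≤ π)
      linarith
    have := abs_nonneg (Real.log θ)
    linarith

lemma int1b : IntervalIntegrable (frr 1) volume 0 (2*π) := by
  apply int1a.trans
  have h := int1a.comp_sub_left (2*π)
  have he : (fun x => frr 1 (2*π - x)) = frr 1 :=
    funext fun x => by simp [frr, Real.cos_two_pi_sub]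
  rw [he] at h
  have h' := h.symm
  rw [show 2*π - π = π by ring, sub_zero] at h'
  exact h'

lemma frr_shift (s : ℝ) (h : IntervalIntegrable (frr s) volume 0 (2*π)) :
    IntervalIntegrable (frr s) volume (2*π) (2*(2*π)) := by
  have hh := h.comp_sub_right (2*π)
  have he : (fun x => frr s (x - 2*π)) = frr s :=
    funext fun x => by simp only [frr, Real.cos_periodic.sub_eq]
  rw [he] at hh
  rw [zero_add] at hh
  rw [show 2*(2*π) = 2*π + 2*π by ring]
  exact hh

lemma intm1 : IntervalIntegrable (frr (-1)) volume 0 (2*π) := by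
  have hπ := Real.pi_pos
  have h1 : IntervalIntegrable (frr 1) volume π (2*π) := by
    apply int1b.mono_set
    rw [Set.uIcc_of_le (by linarith), Set.uIcc_of_le (by linarith)]
    exact Set.Icc_subset_Icc (by linarith) le_rfl
  have h2 : IntervalIntegrable (frr 1) volume (2*π) (3*π) := by
    have hh := int1a.comp_sub_right (2*π)
    have he : (fun x => frr 1 (x - 2*π)) = frr 1 :=
      funext fun x => by simp only [frr, Real.cos_periodic.sub_eq]
    rw [he, zero_add, show π + 2*π = 3*π by ring] at hh
    exact hh
  have h3 : IntervalIntegrable (frr 1) volume π (3*π) := h1.trans h2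
  have h4 := h3.comp_add_right π
  have he : (fun x => frr 1 (x + π)) = frr (-1) :=
    funext fun x => by simp only [frr, Real.cos_add_pi]; ring_nf
  rw [he, sub_self, show 3*π - π = 2*π by ring] at h4
  exact h4

lemma frr_int (r : ℝ) (hr : |r| ≤ 1) : IntervalIntegrable (frr r) volume 0 (2*π) := by
  rcases eq_or_lt_of_le hr with heq | hlt
  · rcases (abs_eq (by norm_num : (0:ℝ) ≤ 1)).mp heq with rfl | rfl
    · exact int1b
    · exact intm1
  · apply Continuous.intervalIntegrable
    exact (continuous_const.sub ((continuous_const.mul Real.continuous_cos))).add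
      continuous_const |>.log fun θ => (pos1 hlt θ).ne'

noncomputable def Jv (r : ℝ) : ℝ := ∫ θ in (0:ℝ)..(2*π), frr r θ

lemma Jv_neg (r : ℝ) : Jv (-r) = Jv r := by
  have h1 : frr (-r) = fun θ => frr r (θ + π) :=
    funext fun θ => by simp only [frr, Real.cos_add_pi]; ring_nf
  rw [Jv, h1, intervalIntegral.integral_comp_add_right (frr r) π]
  have h2 := (frr_periodic r).intervalIntegral_add_eq π 0
  simp only [zero_add] at h2
  rw [zero_add, show 2*π + π = π + 2*π by ring]
  exact h2

lemma Jv_dup (r : ℝ) (hr : |r| ≤ 1) : Jv r + Jv (-r) = Jv (r^2) := by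
  have hπ := Real.pi_pos
  have hr2 : |r^2| ≤ 1 := by
    rw [abs_pow]; exact pow_le_one₀ (abs_nonneg r) hr
  have e1 : Jv r + Jv (-r) = ∫ θ in (0:ℝ)..(2*π), (frr r θ + frr (-r) θ) :=
    (intervalIntegral.integral_add (frr_int r hr) (frr_int (-r) (by rwa [abs_neg]))).symm
  have e2 : (∫ θ in (0:ℝ)..(2*π), (frr r θ + frr (-r) θ))
      = ∫ θ in (0:ℝ)..(2*π), frr (r^2) (2*θ) := by
    apply intervalIntegral.integral_congr_ae
    have hae : ∀ᵐ θ : ℝ, θ ∉ ({π, 2*π} : Set ℝ) :=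
      ((Set.countable_singleton _).insert _).ae_notMem _
    filter_upwards [hae] with θ hθ hI
    rw [Set.uIoc_of_le (by positivity : (0:ℝ) ≤ 2*π)] at hI
    simp only [Set.mem_insert_iff, Set.mem_singleton_iff, not_or] at hθ
    have hcos := abs_cos_lt hI.1 (lt_of_le_of_ne hI.2 hθ.2) hθ.1
    have hp1 : 0 < 1 - 2*r*Real.cos θ + r^2 := pos2 hcos r
    have hp2 : 0 < 1 - 2*(-r)*Real.cos θ + (-r)^2 := pos2 hcos (-r)
    have harg : (1 - 2*r*Real.cos θ + r^2) * (1 - 2*(-r)*Real.cos θ + (-r)^2)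
        = 1 - 2*(r^2)*Real.cos (2*θ) + (r^2)^2 := by
      rw [Real.cos_two_mul]; ring
    simp only [frr]
    rw [← harg, Real.log_mul hp1.ne' hp2.ne']
  have e3 : (∫ θ in (0:ℝ)..(2*π), frr (r^2) (2*θ))
      = 2⁻¹ * ∫ θ in (2*0:ℝ)..(2*(2*π)), frr (r^2) θ := by
    rw [intervalIntegral.integral_comp_mul_left (frr (r^2)) two_ne_zero, smul_eq_mul]
  have e4 : (∫ θ in (2*0:ℝ)..(2*(2*π)), frr (r^2) θ) = 2 * Jv (r^2) := by
    rw [mul_zero]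
    have hsplit := intervalIntegral.integral_add_adjacent_intervals
      (a := (0:ℝ)) (b := 2*π) (c := 2*(2*π)) (frr_int _ hr2) (frr_shift _ (frr_int _ hr2))
    have hper : (∫ θ in (2*π)..(2*(2*π)), frr (r^2) θ) = Jv (r^2) := by
      have h := (frr_periodic (r^2)).intervalIntegral_add_eq (2*π) 0
      simp only [zero_add] at h
      rw [show 2*(2*π) = 2*π + 2*π by ring]
      exact h
    rw [Jv] at *
    linarith
  rw [e1, e2, e3, e4]
  ring

lemma Jv_bound (r : ℝ) (hr : |r| ≤ 1/2) : |Jv r| ≤ 2*π*Real.log 4 := by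
  have hπ := Real.pi_pos
  have h := intervalIntegral.norm_integral_le_of_norm_le_const
    (C := Real.log 4) (f := frr r) (a := 0) (b := 2*π) ?_
  · rw [Real.norm_eq_abs, sub_zero, abs_of_pos (by positivity : (0:ℝ) < 2*π)] at h
    calc |Jv r| ≤ Real.log 4 * (2*π) := h
      _ = 2*π*Real.log 4 := by ring
  · intro x _
    obtain ⟨ha, hb⟩ := abs_le.mp hr
    have hrc : r * Real.cos x ≤ |r| := by
      calc r * Real.cos x ≤ |r * Real.cos x| := le_abs_self _
        _ = |r| * |Real.cos x| := abs_mul _ _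
        _ ≤ |r| * 1 := by
            have := Real.abs_cos_le_one x
            have := abs_nonneg r
            nlinarith
        _ = |r| := mul_one _
    have hrc2 : -(r * Real.cos x) ≤ |r| := by
      calc -(r * Real.cos x) ≤ |r * Real.cos x| := neg_le_abs _
        _ = |r| * |Real.cos x| := abs_mul _ _
        _ ≤ |r| * 1 := by
            have := Real.abs_cos_le_one x
            have := abs_nonneg r
            nlinarith
        _ = |r| := mul_one _
    have habs := abs_nonneg r
    have hsq : r^2 = |r|^2 := (sq_abs r).symm
    have hX1 : (4:ℝ)⁻¹ ≤ 1 - 2*r*Real.cos x + r^2 := by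
      nlinarith [mul_nonneg (show (0:ℝ) ≤ 1/2 - |r| by linarith)
        (show (0:ℝ) ≤ 3/2 - |r| by linarith)]
    have hX2 : 1 - 2*r*Real.cos x + r^2 ≤ 4 := by nlinarith
    rw [Real.norm_eq_abs, frr, abs_le]
    constructor
    · have hl : Real.log (4⁻¹) ≤ Real.log (1 - 2*r*Real.cos x + r^2) :=
        Real.log_le_log (by norm_num) hX1
      rw [Real.log_inv] at hl
      linarith
    · exact Real.log_le_log (lt_of_lt_of_le (by norm_num) hX1) hX2

lemma Jv_iter (r : ℝ) (hr : |r| ≤ 1) (n : ℕ) : Jv r = Jv (r^(2^n)) / 2^n := by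
  induction n with
  | zero => simp
  | succ n ih =>
    have h1 : |r^(2^n)| ≤ 1 := by
      rw [abs_pow]; exact pow_le_one₀ (abs_nonneg r) hr
    have h2 := Jv_dup _ h1
    rw [Jv_neg] at h2
    have h3 : (r^(2^n))^2 = r^(2^(n+1)) := by
      rw [← pow_mul, pow_succ]
    rw [h3] at h2
    rw [ih, ← h2]
    have : (2:ℝ)^(n+1) = 2^n * 2 := by ring
    rw [this]
    have h2n : (0:ℝ) < 2^n := by positivity
    field_simp
    ring

lemma Jv_zero (r : ℝ) (hr : |r| ≤ 1) : Jv r = 0 := by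
  rcases eq_or_lt_of_le hr with h1 | h1
  · have hone : Jv 1 = 0 := by
      have h := Jv_dup 1 (by norm_num)
      rw [Jv_neg] at h
      norm_num at h
      linarith
    have h := Jv_dup r hr
    rw [Jv_neg] at h
    have hr2 : r^2 = 1 := by rw [← sq_abs, h1]; norm_num
    rw [hr2, hone] at h
    linarith
  · have hπ := Real.pi_pos
    have hiter := Jv_iter r hr
    have htend : Tendsto (fun n : ℕ => |r|^n) atTop (nhds 0) :=
      tendsto_pow_atTop_nhds_zero_of_lt_one (abs_nonneg r) h1
    have hev2 : ∀ᶠ n : ℕ in atTop, |r|^n ≤ 1/2 :=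
      htend.eventually (eventually_le_nhds (by norm_num))
    have hev : ∀ᶠ n : ℕ in atTop, |Jv r| ≤ (2*π*Real.log 4) * (1/2)^n := by
      filter_upwards [hev2] with n hn
      have hb : |r^(2^n)| ≤ 1/2 := by
        rw [abs_pow]
        calc |r|^(2^n) ≤ |r|^n :=
              pow_le_pow_of_le_one (abs_nonneg r) h1.le (Nat.lt_two_pow_self (n := n)).le
          _ ≤ 1/2 := hn
      have hJb := Jv_bound _ hb
      rw [hiter n, abs_div, abs_of_pos (show (0:ℝ) < 2^n by positivity)]
      rw [div_le_iff₀ (show (0:ℝ) < 2^n by positivity)]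
      have he : (2*π*Real.log 4) * (1/2)^n * 2^n = 2*π*Real.log 4 := by
        field_simp
        rw [← mul_pow]; norm_num
      rw [he]
      exact hJb
    have htend2 : Tendsto (fun n : ℕ => (2*π*Real.log 4) * (1/2)^n) atTop (nhds 0) := by
      have h := tendsto_pow_atTop_nhds_zero_of_lt_one
        (by norm_num : (0:ℝ) ≤ 1/2) (by norm_num)
      simpa using h.const_mul (2*π*Real.log 4)
    have hle : |Jv r| ≤ 0 := ge_of_tendsto htend2 hev
    have := abs_nonneg (Jv r)
    exact abs_eq_zero.mp (le_antisymm hle this)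

theorem stmt_6 (u ε z : ℝ) (hu : 0 ≤ u) (hε : 0 ≤ ε) (hz : 0 < z)
    (hne : (u, ε) ≠ (0, 0)) :
    (1 / (2 * π)) * ∫ θ in (0:ℝ)..(2 * π),
        Real.log (u ^ 2 + ε ^ 2 + z ^ 2 + 2 * u * z * Real.cos θ)
      ≥ max (Real.log (u ^ 2 + ε ^ 2)) (Real.log (z ^ 2)) := by
  have hπ := Real.pi_pos
  have hA : 0 < u^2 + ε^2 := by
    rcases lt_or_eq_of_le hu with h | h
    · positivity
    · rcases lt_or_eq_of_le hε with h' | h'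
      · positivity
      · exact absurd (by rw [← h, ← h']) hne
  set S := u^2 + ε^2 + z^2 with hS
  have hS0 : 0 < S := by positivity
  have hrad : 0 ≤ S^2 - 4*u^2*z^2 := by
    rw [hS]; nlinarith [sq_nonneg (u^2 + ε^2 - z^2), sq_nonneg (ε*z)]
  set D := Real.sqrt (S^2 - 4*u^2*z^2) with hD
  have hD0 : 0 ≤ D := Real.sqrt_nonneg _
  have hD2 : D^2 = S^2 - 4*u^2*z^2 := Real.sq_sqrt hrad
  have hDS : D ≤ S := by
    have h1 : S^2 - 4*u^2*z^2 ≤ S^2 := by nlinarith [sq_nonneg (u*z)]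
    calc D ≤ Real.sqrt (S^2) := Real.sqrt_le_sqrt h1
      _ = S := Real.sqrt_sq hS0.le
  have hDabs : |u^2 + ε^2 - z^2| ≤ D := by
    rw [← Real.sqrt_sq_eq_abs]
    apply Real.sqrt_le_sqrt
    rw [hS]; nlinarith [sq_nonneg (ε*z)]
  set M := (S + D)/2 with hM
  set m := (S - D)/2 with hm
  have hM0 : 0 < M := by rw [hM]; linarith
  have hm0 : 0 ≤ m := by rw [hm]; linarith
  have hMm : M * m = (u*z)^2 := by
    have h : M * m = (S^2 - D^2)/4 := by rw [hM, hm]; ring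
    rw [h, hD2]; ring
  obtain ⟨habs1, habs2⟩ := abs_le.mp hDabs
  have hMA : u^2 + ε^2 ≤ M := by rw [hM, hS] at *; linarith
  have hMz : z^2 ≤ M := by rw [hM, hS] at *; linarith
  set r := Real.sqrt m / Real.sqrt M with hr
  have hr0 : 0 ≤ r := by rw [hr]; positivity
  have hr1 : r ≤ 1 := by
    rw [hr]
    apply div_le_one_of_le₀
    · apply Real.sqrt_le_sqrt; rw [hM, hm]; linarith
    · exact Real.sqrt_nonneg _
  have hMr2 : M * r^2 = m := by
    rw [hr, div_pow, Real.sq_sqrt hm0, Real.sq_sqrt hM0.le]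
    field_simp
  have hsqrtMm : Real.sqrt M * Real.sqrt m = u*z := by
    rw [← Real.sqrt_mul hM0.le, hMm]
    exact Real.sqrt_sq (mul_nonneg hu hz.le)
  have hMr : M * (2*r) = 2*(u*z) := by
    have hMs : Real.sqrt M ≠ 0 := by
      intro h
      rw [Real.sqrt_eq_zero hM0.le] at h
      exact hM0.ne' h
    rw [hr]
    rw [show M * (2*(Real.sqrt m / Real.sqrt M)) = 2*(Real.sqrt m * (M / Real.sqrt M)) by ring]
    rw [Real.div_sqrt, mul_comm (Real.sqrt m), hsqrtMm]
  have hSM : u^2 + ε^2 + z^2 = M + m := by rw [hM, hm]; ring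
  have key : ∀ θ, u^2 + ε^2 + z^2 + 2*u*z*Real.cos θ
      = M * (1 - 2*(-r)*Real.cos θ + (-r)^2) := by
    intro θ
    have : M * (1 - 2*(-r)*Real.cos θ + (-r)^2)
        = M + M*r^2 + (M*(2*r))*Real.cos θ := by ring
    rw [this, hMr2, hMr, hSM]
    ring
  have hIeq : (∫ θ in (0:ℝ)..(2*π),
        Real.log (u^2 + ε^2 + z^2 + 2*u*z*Real.cos θ))
      = ∫ θ in (0:ℝ)..(2*π), (Real.log M + frr (-r) θ) := by
    apply intervalIntegral.integral_congr_ae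
    have hae : ∀ᵐ θ : ℝ, θ ∉ ({π, 2*π} : Set ℝ) :=
      ((Set.countable_singleton _).insert _).ae_notMem _
    filter_upwards [hae] with θ hθ hI
    rw [Set.uIoc_of_le (by positivity : (0:ℝ) ≤ 2*π)] at hI
    simp only [Set.mem_insert_iff, Set.mem_singleton_iff, not_or] at hθ
    have hcos := abs_cos_lt hI.1 (lt_of_le_of_ne hI.2 hθ.2) hθ.1
    have hp : 0 < 1 - 2*(-r)*Real.cos θ + (-r)^2 := pos2 hcos (-r)
    rw [key θ, frr, Real.log_mul hM0.ne' hp.ne']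
  have hrneg : |(-r : ℝ)| ≤ 1 := by rw [abs_neg, abs_of_nonneg hr0]; exact hr1
  have hsum : (∫ θ in (0:ℝ)..(2*π), (Real.log M + frr (-r) θ))
      = 2*π*Real.log M + Jv (-r) := by
    rw [intervalIntegral.integral_add intervalIntegrable_const (frr_int (-r) hrneg)]
    rw [intervalIntegral.integral_const, sub_zero, smul_eq_mul]
    rfl
  have hJ : Jv (-r) = 0 := by
    rw [Jv_neg]
    exact Jv_zero r (by rwa [abs_of_nonneg hr0])
  rw [ge_iff_le, hIeq, hsum, hJ, add_zero]
  have heval : 1/(2*π) * (2*π*Real.log M) = Real.log M := by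
    field_simp
  rw [heval]
  exact max_le (Real.log_le_log hA hMA) (Real.log_le_log (by positivity) hMz)
end

section
/- Let α > 0, t₀ ∈ ℝ, δ > 0, and let r : [t₀-δ, t₀] → [0,∞) be continuously differentiable on [t₀-δ, t₀) with r(t) > 0 for t < t₀, r(t₀) = 0, and suppose there exist constants 0 < c₁ ≤ c₂ such that c₁ ≤ -ṙ(t)·r(t)^{α/2} ≤ c₂ for all t ∈ [t₀-δ, t₀). Then for all t ∈ [t₀-δ, t₀], k₁·(t₀-t)^{2/(α+2)} ≤ r(t) ≤ k₂·(t₀-t)^{2/(α+2)}, where kᵢ = ((α+2)/2 · cᵢ)^{2/(α+2)} for i = 1,2. -/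
open Set

theorem stmt_8 (α t₀ δ c₁ c₂ : ℝ) (hα : 0 < α) (hδ : 0 < δ)
    (hc₁ : 0 < c₁) (hc₁₂ : c₁ ≤ c₂)
    (r r' : ℝ → ℝ)
    (hrc : ContinuousOn r (Icc (t₀ - δ) t₀))
    (hr' : ∀ t ∈ Ico (t₀ - δ) t₀, HasDerivAt r (r' t) t)
    (hr'c : ContinuousOn r' (Ico (t₀ - δ) t₀))
    (hrpos : ∀ t ∈ Ico (t₀ - δ) t₀, 0 < r t)
    (hr0 : r t₀ = 0)
    (hbound : ∀ t ∈ Ico (t₀ - δ) t₀,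
      c₁ ≤ -r' t * r t ^ (α / 2) ∧ -r' t * r t ^ (α / 2) ≤ c₂) :
    ∀ t ∈ Icc (t₀ - δ) t₀,
      ((α + 2) / 2 * c₁) ^ (2 / (α + 2)) * (t₀ - t) ^ (2 / (α + 2)) ≤ r t ∧
      r t ≤ ((α + 2) / 2 * c₂) ^ (2 / (α + 2)) * (t₀ - t) ^ (2 / (α + 2)) := by
  have hα2 : (0:ℝ) < α + 2 := by linarith
  set p : ℝ := (α + 2) / 2 with hp
  set q : ℝ := 2 / (α + 2) with hq
  have hppos : 0 < p := by positivity
  have hqpos : 0 < q := by positivity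
  have hpq : p * q = 1 := by
    rw [hp, hq]; field_simp
  set g : ℝ → ℝ := fun y => (2 / (α + 2)) * r y ^ p with hgdef
  -- derivative of g
  have hg' : ∀ x ∈ Ico (t₀ - δ) t₀, HasDerivAt g (r' x * r x ^ (α / 2)) x := by
    intro x hx
    have h1 : HasDerivAt (fun y => r y ^ p) (r' x * p * r x ^ (p - 1)) x :=
      (hr' x hx).rpow_const (Or.inl (ne_of_gt (hrpos x hx)))
    have h2 := h1.const_mul (2 / (α + 2))
    refine h2.congr_deriv ?_
    rw [show p - 1 = α / 2 by rw [hp]; ring, hp]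
    field_simp
  -- continuity of g
  have hgc : ContinuousOn g (Icc (t₀ - δ) t₀) :=
    continuousOn_const.mul (hrc.rpow_const (fun x hx => Or.inr hppos.le))
  have hg0 : g t₀ = 0 := by
    simp [hgdef, hr0, Real.zero_rpow (ne_of_gt hppos)]
  have hIoo : Ioo (t₀ - δ) t₀ ⊆ Ico (t₀ - δ) t₀ := Ioo_subset_Ico_self
  -- lower bound: c₁ * (t₀ - t) ≤ g t
  have hlow : ∀ t ∈ Icc (t₀ - δ) t₀, c₁ * (t₀ - t) ≤ g t := by
    intro t ht
    have hanti : AntitoneOn (fun y => g y + c₁ * y) (Icc (t₀ - δ) t₀) := by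
      apply antitoneOn_of_deriv_nonpos (convex_Icc _ _)
      · exact hgc.add (continuousOn_const.mul continuousOn_id)
      · intro x hx
        rw [interior_Icc] at hx
        have hφ : HasDerivAt (fun y => g y + c₁ * y) (r' x * r x ^ (α / 2) + c₁ * 1) x :=
          (hg' x (hIoo hx)).add ((hasDerivAt_id x).const_mul c₁)
        exact hφ.differentiableAt.differentiableWithinAt
      · intro x hx
        rw [interior_Icc] at hx
        have hφ : HasDerivAt (fun y => g y + c₁ * y) (r' x * r x ^ (α / 2) + c₁ * 1) x :=
          (hg' x (hIoo hx)).add ((hasDerivAt_id x).const_mul c₁)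
        rw [hφ.deriv]
        have := (hbound x (hIoo hx)).1
        nlinarith [this]
    have h := hanti ht (right_mem_Icc.mpr (by linarith [ht.1, ht.2])) ht.2
    simp only [hg0] at h
    linarith
  -- upper bound: g t ≤ c₂ * (t₀ - t)
  have hhigh : ∀ t ∈ Icc (t₀ - δ) t₀, g t ≤ c₂ * (t₀ - t) := by
    intro t ht
    have hmono : MonotoneOn (fun y => g y + c₂ * y) (Icc (t₀ - δ) t₀) := by
      apply monotoneOn_of_deriv_nonneg (convex_Icc _ _)
      · exact hgc.add (continuousOn_const.mul continuousOn_id)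
      · intro x hx
        rw [interior_Icc] at hx
        have hφ : HasDerivAt (fun y => g y + c₂ * y) (r' x * r x ^ (α / 2) + c₂ * 1) x :=
          (hg' x (hIoo hx)).add ((hasDerivAt_id x).const_mul c₂)
        exact hφ.differentiableAt.differentiableWithinAt
      · intro x hx
        rw [interior_Icc] at hx
        have hφ : HasDerivAt (fun y => g y + c₂ * y) (r' x * r x ^ (α / 2) + c₂ * 1) x :=
          (hg' x (hIoo hx)).add ((hasDerivAt_id x).const_mul c₂)
        rw [hφ.deriv]
        have := (hbound x (hIoo hx)).2
        nlinarith [this]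
    have h := hmono ht (right_mem_Icc.mpr (by linarith [ht.1, ht.2])) ht.2
    simp only [hg0] at h
    linarith
  -- conclude
  intro t ht
  rcases eq_or_lt_of_le ht.2 with heq | hlt
  · subst heq
    simp [hr0, Real.zero_rpow (ne_of_gt hqpos)]
  · have htI : t ∈ Ico (t₀ - δ) t₀ := ⟨ht.1, hlt⟩
    have hrt : 0 < r t := hrpos t htI
    have htt : 0 < t₀ - t := by linarith
    have h1 := hlow t ht
    have h2 := hhigh t ht
    -- from c₁ (t₀ - t) ≤ (2/(α+2)) r t ^ p : get p * c₁ * (t₀ - t) ≤ r t ^ p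
    have hl2 : p * c₁ * (t₀ - t) ≤ r t ^ p := by
      have h3 : p * (c₁ * (t₀ - t)) ≤ p * g t := by nlinarith
      rw [hgdef] at h3
      simp only at h3
      have : p * ((2 / (α + 2)) * r t ^ p) = r t ^ p := by
        rw [hp]; field_simp
      nlinarith [this]
    have hh2 : r t ^ p ≤ p * c₂ * (t₀ - t) := by
      have h3 : p * g t ≤ p * (c₂ * (t₀ - t)) := by nlinarith
      rw [hgdef] at h3
      simp only at h3
      have : p * ((2 / (α + 2)) * r t ^ p) = r t ^ p := by
        rw [hp]; field_simp
      nlinarith [this]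
    have hrpq : (r t ^ p) ^ q = r t := by
      rw [← Real.rpow_mul hrt.le, hpq, Real.rpow_one]
    constructor
    · have := Real.rpow_le_rpow
        (mul_nonneg (mul_nonneg hppos.le hc₁.le) htt.le) hl2 hqpos.le
      rw [hrpq] at this
      calc ((α + 2) / 2 * c₁) ^ q * (t₀ - t) ^ q
          = (p * c₁ * (t₀ - t)) ^ q := by
            rw [Real.mul_rpow (by positivity) htt.le, hp]
        _ ≤ r t := this
    · have := Real.rpow_le_rpow (Real.rpow_nonneg hrt.le p) hh2 hqpos.le
      rw [hrpq] at this
      calc r t ≤ (p * c₂ * (t₀ - t)) ^ q := this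
        _ = ((α + 2) / 2 * c₂) ^ q * (t₀ - t) ^ q := by
            rw [Real.mul_rpow (mul_nonneg hppos.le (hc₁.trans_le hc₁₂).le) htt.le, hp]
end

section
/- Let t* < ∞, I* ∈ ℝ, K > 0, ε > 0, and let f : [0, t*) → ℝ be twice continuously differentiable. Suppose that f''(t) ≥ -K whenever f(t) ≥ I* - ε. Then it cannot happen that simultaneously limsup_{t→t*⁻} f(t) = I* and liminf_{t→t*⁻} f(t) < I* - ε. -/
open Set Filter

theorem stmt_12 (tstar Istar K ε : ℝ) (htstar : 0 < tstar) (hK : 0 < K) (hε : 0 < ε)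
    (f f' f'' : ℝ → ℝ)
    (hf' : ∀ t ∈ Ico (0:ℝ) tstar, HasDerivAt f (f' t) t)
    (hf'' : ∀ t ∈ Ico (0:ℝ) tstar, HasDerivAt f' (f'' t) t)
    (hf''c : ContinuousOn f'' (Ico (0:ℝ) tstar))
    (hconv : ∀ t ∈ Ico (0:ℝ) tstar, Istar - ε ≤ f t → -K ≤ f'' t) :
    ¬ (Filter.limsup f (nhdsWithin tstar (Iio tstar)) = Istar ∧
       Filter.liminf f (nhdsWithin tstar (Iio tstar)) < Istar - ε) := by
  rintro ⟨hsup, hinf⟩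
  set l : Filter ℝ := nhdsWithin tstar (Iio tstar) with hl
  have hlne : l.NeBot := nhdsLT_neBot tstar
  -- Step 1: frequently f < Istar - ε
  have h1 : ∃ᶠ t in l, f t < Istar - ε := by
    by_contra h
    have hev : ∀ᶠ t in l, Istar - ε ≤ f t := by
      simpa using Filter.not_frequently.mp h
    by_cases hBb : BddAbove {a : ℝ | ∀ᶠ t in l, a ≤ f t}
    · have hge : Istar - ε ≤ Filter.liminf f l := by
        rw [Filter.liminf_eq]
        exact le_csSup hBb hev
      linarith
    · have h0' : Filter.liminf f l = 0 := by
        rw [Filter.liminf_eq]; exact Real.sSup_of_not_bddAbove hBb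
      have hA : {a : ℝ | ∀ᶠ t in l, f t ≤ a} = ∅ := by
        ext a
        simp only [Set.mem_setOf_eq, Set.mem_empty_iff_false, iff_false]
        intro haf
        obtain ⟨b, hb0, hab⟩ := not_bddAbove_iff.mp hBb a
        obtain ⟨t, h1t, h2t⟩ := (haf.and hb0).exists
        linarith
      have h0 : Filter.limsup f l = 0 := by
        rw [Filter.limsup_eq, hA, Real.sInf_empty]
      rw [h0'] at hinf; rw [h0] at hsup; linarith
  -- Step 2: frequently f > Istar - ε/2
  have h2 : ∃ᶠ t in l, Istar - ε/2 < f t := by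
    by_contra h
    have hev : ∀ᶠ t in l, f t ≤ Istar - ε/2 := by
      simpa using Filter.not_frequently.mp h
    by_cases hA : BddBelow {a : ℝ | ∀ᶠ t in l, f t ≤ a}
    · have hle : Filter.limsup f l ≤ Istar - ε/2 := by
        rw [Filter.limsup_eq]
        exact csInf_le hA hev
      rw [hsup] at hle; linarith
    · have h0 : Filter.limsup f l = 0 := by
        rw [Filter.limsup_eq]; exact Real.sInf_of_not_bddBelow hA
      have hB : {a : ℝ | ∀ᶠ t in l, a ≤ f t} = ∅ := by
        ext b
        simp only [Set.mem_setOf_eq, Set.mem_empty_iff_false, iff_false]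
        intro hbf
        obtain ⟨a, ha, hab⟩ := not_bddBelow_iff.mp hA b
        obtain ⟨t, h1t, h2t⟩ := (hbf.and ha).exists
        linarith
      have h0' : Filter.liminf f l = 0 := by
        rw [Filter.liminf_eq, hB, Real.sSup_empty]
      rw [h0'] at hinf; rw [h0] at hsup; linarith
  -- pick points a' < a < b close to tstar
  have hKε : 0 < ε / K := div_pos hε hK
  have hsq : 0 < Real.sqrt (ε / K) := Real.sqrt_pos.mpr hKε
  set δ : ℝ := min tstar (Real.sqrt (ε / K)) / 2 with hδ
  have hδpos : 0 < δ := by positivity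
  have hδ1 : δ ≤ tstar / 2 := by
    have := min_le_left tstar (Real.sqrt (ε / K)); simp only [hδ]; linarith
  have hδ2 : δ < Real.sqrt (ε / K) := by
    have := min_le_right tstar (Real.sqrt (ε / K)); simp only [hδ]; linarith
  obtain ⟨a', ha'f, ha'mem⟩ :=
    (h1.and_eventually (Ioo_mem_nhdsLT (by linarith : tstar - δ < tstar))).exists
  obtain ⟨a, haf, hamem⟩ :=
    (h2.and_eventually (Ioo_mem_nhdsLT ha'mem.2)).exists
  obtain ⟨b, hbf, hbmem⟩ :=
    (h1.and_eventually (Ioo_mem_nhdsLT hamem.2)).exists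
  have ha'0 : 0 < a' := by
    have := ha'mem.1; linarith
  have hab : a' < b := lt_trans hamem.1 hbmem.1
  have hsub : Icc a' b ⊆ Ico (0:ℝ) tstar := fun t ht =>
    ⟨le_trans ha'0.le ht.1, lt_of_le_of_lt ht.2 hbmem.2⟩
  have hcont : ContinuousOn f (Icc a' b) := fun t ht =>
    ((hf' t (hsub ht)).continuousAt).continuousWithinAt
  -- maximum point
  obtain ⟨tm, htm_mem, htm_max⟩ :=
    isCompact_Icc.exists_isMaxOn (Set.nonempty_Icc.mpr hab.le) hcont
  have hfa_le : f a ≤ f tm := htm_max ⟨hamem.1.le, hbmem.1.le⟩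
  have hftm : Istar - ε/2 < f tm := lt_of_lt_of_le haf hfa_le
  have htm_ne1 : tm ≠ a' := by rintro rfl; linarith
  have htm_ne2 : tm ≠ b := by rintro rfl; linarith
  have htm_in : tm ∈ Ioo a' b :=
    ⟨lt_of_le_of_ne htm_mem.1 (Ne.symm htm_ne1), lt_of_le_of_ne htm_mem.2 htm_ne2⟩
  have hftm' : f' tm = 0 :=
    (htm_max.isLocalMax (Icc_mem_nhds htm_in.1 htm_in.2)).hasDerivAt_eq_zero
      (hf' tm (hsub htm_mem))
  -- the first time f drops to Istar - ε after tm
  set S : Set ℝ := Icc tm b ∩ f ⁻¹' (Iic (Istar - ε)) with hS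
  have hScl : IsClosed S :=
    (hcont.mono (Icc_subset_Icc_left htm_mem.1)).preimage_isClosed_of_isClosed
      isClosed_Icc isClosed_Iic
  have hScomp : IsCompact S :=
    isCompact_Icc.of_isClosed_subset hScl Set.inter_subset_left
  have hSne : S.Nonempty := ⟨b, ⟨htm_mem.2, le_refl b⟩, hbf.le⟩
  have hSbdd : BddBelow S := ⟨tm, fun t ht => ht.1.1⟩
  set s : ℝ := sInf S with hs
  have hsS : s ∈ S := hScomp.sInf_mem hSne
  have hsIcc : s ∈ Icc tm b := hsS.1
  have hfs : f s ≤ Istar - ε := hsS.2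
  have htms : tm < s := by
    rcases lt_or_eq_of_le hsIcc.1 with h | h
    · exact h
    · exfalso; rw [← h] at hfs; linarith
  have hmin : ∀ t ∈ Ico tm s, Istar - ε < f t := by
    intro t ht
    by_contra hc
    have : t ∈ S := ⟨⟨ht.1, le_trans ht.2.le hsIcc.2⟩, le_of_not_gt hc⟩
    exact absurd (csInf_le hSbdd this) (not_le.mpr ht.2)
  have hIccsub : Icc tm s ⊆ Ico (0:ℝ) tstar := fun t ht =>
    hsub ⟨le_trans htm_mem.1 ht.1, le_trans ht.2 hsIcc.2⟩
  -- g' = f' + K(t - tm) is monotone on [tm, s], hence nonneg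
  set g1 : ℝ → ℝ := fun t => f' t + K * (t - tm) with hg1
  have hg1d : ∀ x ∈ Ico (0:ℝ) tstar, HasDerivAt g1 (f'' x + K) x := by
    intro x hx
    have h1' : HasDerivAt (fun t : ℝ => K * (t - tm)) (K * 1) x :=
      (((hasDerivAt_id x).sub_const tm)).const_mul K
    have h2' : HasDerivAt g1 (f'' x + K * 1) x := (hf'' x hx).add h1'
    rwa [mul_one] at h2'
  have hg1mono : MonotoneOn g1 (Icc tm s) := by
    apply monotoneOn_of_deriv_nonneg (convex_Icc tm s)
    · intro x hx
      exact ((hg1d x (hIccsub hx)).continuousAt).continuousWithinAt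
    · intro x hx
      rw [interior_Icc] at hx
      exact ((hg1d x (hIccsub (Ioo_subset_Icc_self hx))).differentiableAt).differentiableWithinAt
    · intro x hx
      rw [interior_Icc] at hx
      have hxm : x ∈ Ico (0:ℝ) tstar := hIccsub (Ioo_subset_Icc_self hx)
      rw [(hg1d x hxm).deriv]
      have : Istar - ε ≤ f x := (hmin x ⟨hx.1.le, hx.2⟩).le
      have := hconv x hxm this
      linarith
  have hg1nonneg : ∀ t ∈ Icc tm s, 0 ≤ g1 t := by
    intro t ht
    have := hg1mono (left_mem_Icc.mpr htms.le) ht ht.1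
    have h0 : g1 tm = 0 := by simp [hg1, hftm']
    linarith [h0 ▸ this]
  -- g = f + K(t-tm)^2/2 is monotone on [tm, s]
  set g : ℝ → ℝ := fun t => f t + K * (t - tm) ^ 2 / 2 with hg
  have hgd : ∀ x ∈ Ico (0:ℝ) tstar, HasDerivAt g (g1 x) x := by
    intro x hx
    have h1' : HasDerivAt (fun t : ℝ => K * (t - tm) ^ 2 / 2)
        (K * (2 * (x - tm) ^ 1 * 1) / 2) x :=
      ((((hasDerivAt_id x).sub_const tm)).pow 2).const_mul K |>.div_const 2
    have : HasDerivAt g (f' x + K * (2 * (x - tm) ^ 1 * 1) / 2) x := (hf' x hx).add h1'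
    convert this using 1
    simp [hg1]; ring
  have hgmono : MonotoneOn g (Icc tm s) := by
    apply monotoneOn_of_deriv_nonneg (convex_Icc tm s)
    · intro x hx
      exact ((hgd x (hIccsub hx)).continuousAt).continuousWithinAt
    · intro x hx
      rw [interior_Icc] at hx
      exact ((hgd x (hIccsub (Ioo_subset_Icc_self hx))).differentiableAt).differentiableWithinAt
    · intro x hx
      rw [interior_Icc] at hx
      rw [(hgd x (hIccsub (Ioo_subset_Icc_self hx))).deriv]
      exact hg1nonneg x (Ioo_subset_Icc_self hx)
  have hkey : g tm ≤ g s :=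
    hgmono (left_mem_Icc.mpr htms.le) (right_mem_Icc.mpr htms.le) htms.le
  have hgap : ε / 2 ≤ K * (s - tm) ^ 2 / 2 := by
    simp only [hg, sub_self] at hkey
    have : f tm ≤ f s + K * (s - tm) ^ 2 / 2 := by
      simpa using hkey
    linarith
  -- but s - tm < sqrt(ε/K)
  have hlt : s - tm < Real.sqrt (ε / K) := by
    have h1' : s ≤ b := hsIcc.2
    have h2' : a' ≤ tm := htm_mem.1
    have : b - a' < δ := by
      have := ha'mem.1; have := hbmem.2; linarith
    linarith
  have hnn : 0 ≤ s - tm := by linarith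
  have hsq2 : (s - tm) ^ 2 < ε / K := by
    have := Real.sq_sqrt hKε.le
    nlinarith [Real.sqrt_nonneg (ε / K)]
  have : K * (s - tm) ^ 2 < ε := by
    calc K * (s - tm) ^ 2 < K * (ε / K) := by
          exact (mul_lt_mul_iff_right₀ hK).mpr hsq2
      _ = ε := by field_simp
  linarith
end

section
/- Let f(ξ) = -√(-2M₀ log ξ) for ξ ∈ (0,1), with M₀ > 0, and let r, R : [t₁, t₀) → (0,1) be C¹ functions, both tending to 0 as t → t₀⁻, with ṙ(t)/f(r(t)) → 1 and Ṙ(t)/f(R(t)) → 1 as t → t₀⁻, and r, R decreasing near t₀. Then r(t)/R(t) → 1 as t → t₀⁻. -/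
open Set Filter MeasureTheory

noncomputable def gfun (M₀ ξ : ℝ) : ℝ := Real.sqrt (-2 * M₀ * Real.log ξ)

noncomputable def Psi (M₀ x : ℝ) : ℝ := ∫ η in (0:ℝ)..x, 1 / gfun M₀ η

lemma gfun_nonneg (M₀ ξ : ℝ) : 0 ≤ gfun M₀ ξ := Real.sqrt_nonneg _

lemma gfun_pos {M₀ ξ : ℝ} (hM₀ : 0 < M₀) (h1 : 0 < ξ) (h2 : ξ < 1) : 0 < gfun M₀ ξ := by
  apply Real.sqrt_pos.2
  have : Real.log ξ < 0 := Real.log_neg h1 h2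
  nlinarith

lemma gfun_anti {M₀ a b : ℝ} (hM₀ : 0 < M₀) (ha : 0 < a) (hab : a ≤ b) :
    gfun M₀ b ≤ gfun M₀ a := by
  apply Real.sqrt_le_sqrt
  have : Real.log a ≤ Real.log b := Real.log_le_log ha hab
  nlinarith

lemma inv_gfun_le {M₀ a b : ℝ} (hM₀ : 0 < M₀) (ha : 0 < a) (hab : a ≤ b) (hb : b < 1) :
    1 / gfun M₀ a ≤ 1 / gfun M₀ b :=
  one_div_le_one_div_of_le (gfun_pos hM₀ (lt_of_lt_of_le ha hab) hb) (gfun_anti hM₀ ha hab)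

lemma gfun_measurable (M₀ : ℝ) : Measurable (fun η => 1 / gfun M₀ η) :=
  measurable_const.div
    (Real.continuous_sqrt.measurable.comp (Real.measurable_log.const_mul (-2 * M₀)))

lemma psi_intervalIntegrable {M₀ a b : ℝ} (hM₀ : 0 < M₀) (ha : 0 ≤ a) (hab : a ≤ b)
    (hb : b < 1) :
    IntervalIntegrable (fun η => 1 / gfun M₀ η) MeasureTheory.volume a b := by
  rw [intervalIntegrable_iff_integrableOn_Ioc_of_le hab]
  apply MeasureTheory.Measure.integrableOn_of_bounded (M := 1 / gfun M₀ b)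
  · exact measure_Ioc_lt_top.ne
  · exact (gfun_measurable M₀).aestronglyMeasurable
  · rw [MeasureTheory.ae_restrict_iff' measurableSet_Ioc]
    filter_upwards with x hx
    have hx0 : 0 < x := lt_of_le_of_lt ha hx.1
    rw [Real.norm_eq_abs, abs_of_nonneg (div_nonneg zero_le_one (gfun_nonneg _ _))]
    exact inv_gfun_le hM₀ hx0 hx.2 hb

lemma Psi_nonneg {M₀ x : ℝ} (hx : 0 ≤ x) : 0 ≤ Psi M₀ x := by
  apply intervalIntegral.integral_nonneg hx
  intro u _
  exact div_nonneg zero_le_one (gfun_nonneg _ _)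

lemma Psi_le {M₀ x : ℝ} (hM₀ : 0 < M₀) (hx : 0 < x) (hx1 : x < 1) :
    Psi M₀ x ≤ x * (1 / gfun M₀ x) := by
  have h := intervalIntegral.integral_mono_on (μ := MeasureTheory.volume)
    (f := fun η => 1 / gfun M₀ η) (g := fun _ => 1 / gfun M₀ x) hx.le
    (psi_intervalIntegrable hM₀ le_rfl hx.le hx1) intervalIntegrable_const ?_
  · simpa [Psi] using h
  · intro η hη
    rcases eq_or_lt_of_le hη.1 with h0 | h0
    · subst h0
      show 1 / gfun M₀ 0 ≤ 1 / gfun M₀ x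
      have hg0 : gfun M₀ 0 = 0 := by simp [gfun]
      rw [hg0, div_zero]
      exact div_nonneg zero_le_one (gfun_nonneg _ _)
    · exact inv_gfun_le hM₀ h0 hη.2 hx1

lemma Psi_gap {M₀ a b : ℝ} (hM₀ : 0 < M₀) (ha : 0 < a) (hab : a ≤ b) (hb : b < 1) :
    Psi M₀ a + (b - a) * (1 / gfun M₀ a) ≤ Psi M₀ b := by
  have hadd := intervalIntegral.integral_add_adjacent_intervals
    (psi_intervalIntegrable hM₀ le_rfl ha.le (lt_of_le_of_lt hab hb))
    (psi_intervalIntegrable hM₀ ha.le hab hb)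
  have hmono := intervalIntegral.integral_mono_on (μ := MeasureTheory.volume)
    (f := fun _ => 1 / gfun M₀ a) (g := fun η => 1 / gfun M₀ η) hab
    intervalIntegrable_const (psi_intervalIntegrable hM₀ ha.le hab hb) ?_
  · have h1 : ∫ η in a..b, (1:ℝ) / gfun M₀ a = (b - a) * (1 / gfun M₀ a) := by
      simp [smul_eq_mul]
    rw [Psi, Psi, ← hadd]
    rw [h1] at hmono
    linarith
  · intro η hη
    have hη0 : 0 < η := lt_of_lt_of_le ha hη.1
    have hη1 : η < 1 := lt_of_le_of_lt hη.2 hb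
    exact one_div_le_one_div_of_le (gfun_pos hM₀ hη0 hη1) (gfun_anti hM₀ ha hη.1)

lemma Psi_strictMono {M₀ a b : ℝ} (hM₀ : 0 < M₀) (ha : 0 < a) (hab : a < b) (hb : b < 1) :
    Psi M₀ a < Psi M₀ b := by
  have h := Psi_gap hM₀ ha hab.le hb
  have hg : 0 < gfun M₀ a := gfun_pos hM₀ ha (lt_trans hab hb)
  have : 0 < (b - a) * (1 / gfun M₀ a) := mul_pos (sub_pos.2 hab) (one_div_pos.2 hg)
  linarith

lemma Psi_mul {M₀ x e : ℝ} (hM₀ : 0 < M₀) (hx : 0 < x) (he : 0 < e)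
    (h1 : (1 + e) * x < 1) :
    (1 + e) * Psi M₀ x ≤ Psi M₀ ((1 + e) * x) := by
  have hx1 : x < 1 := by nlinarith
  have hgap := Psi_gap hM₀ hx (by nlinarith : x ≤ (1 + e) * x) h1
  have hle := Psi_le hM₀ hx hx1
  have hg : 0 ≤ 1 / gfun M₀ x := div_nonneg zero_le_one (gfun_nonneg _ _)
  nlinarith [hg, hle, hgap]

lemma Psi_hasDerivAt {M₀ x : ℝ} (hM₀ : 0 < M₀) (hx : 0 < x) (hx1 : x < 1) :
    HasDerivAt (Psi M₀) (1 / gfun M₀ x) x := by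
  apply intervalIntegral.integral_hasDerivAt_right
    (psi_intervalIntegrable hM₀ le_rfl hx.le hx1)
    ((gfun_measurable M₀).stronglyMeasurable.stronglyMeasurableAtFilter)
  have hg : ContinuousAt (gfun M₀) x :=
    Real.continuous_sqrt.continuousAt.comp ((Real.continuousAt_log hx.ne').const_mul (-2 * M₀))
  exact continuousAt_const.div hg (gfun_pos hM₀ hx hx1).ne'

lemma sandwich {h h' : ℝ → ℝ} {s t₀ ε : ℝ}
    (hd : ∀ t ∈ Ico s t₀, HasDerivAt h (h' t) t)
    (hb : ∀ t ∈ Ico s t₀, |h' t + 1| ≤ ε)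
    (h0 : Tendsto h (nhdsWithin t₀ (Iio t₀)) (nhds 0)) :
    ∀ t ∈ Ico s t₀, |h t - (t₀ - t)| ≤ ε * (t₀ - t) := by
  intro t htm
  have htlt : t < t₀ := htm.2
  have key : ∀ u ∈ Ico t t₀, |h u + u - (h t + t)| ≤ ε * (u - t) := by
    intro u hu
    have hsub : Icc t u ⊆ Ico s t₀ := fun z hz =>
      ⟨le_trans htm.1 hz.1, lt_of_le_of_lt hz.2 hu.2⟩
    have := Convex.norm_image_sub_le_of_norm_hasDerivWithin_le
      (f := fun x => h x + x) (f' := fun x => h' x + 1) (s := Icc t u) (C := ε)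
      (fun x hx => ((hd x (hsub hx)).add (hasDerivAt_id x)).hasDerivWithinAt)
      (fun x hx => by simpa using hb x (hsub hx)) (convex_Icc t u)
      (left_mem_Icc.2 hu.1) (right_mem_Icc.2 hu.1)
    rw [Real.norm_eq_abs, Real.norm_eq_abs, abs_of_nonneg (sub_nonneg.2 hu.1)] at this
    exact this
  have hidt : Tendsto (fun u : ℝ => u) (nhdsWithin t₀ (Iio t₀)) (nhds t₀) :=
    tendsto_id.mono_left nhdsWithin_le_nhds
  have hlim1 : Tendsto (fun u => |h u + u - (h t + t)|) (nhdsWithin t₀ (Iio t₀))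
      (nhds |0 + t₀ - (h t + t)|) :=
    (((h0.add hidt).sub tendsto_const_nhds).abs)
  have hlim2 : Tendsto (fun u => ε * (u - t)) (nhdsWithin t₀ (Iio t₀))
      (nhds (ε * (t₀ - t))) :=
    (hidt.sub tendsto_const_nhds).const_mul ε
  have hev : ∀ᶠ u in nhdsWithin t₀ (Iio t₀), |h u + u - (h t + t)| ≤ ε * (u - t) := by
    filter_upwards [eventually_mem_nhdsWithin,
      (eventually_gt_nhds htlt).filter_mono nhdsWithin_le_nhds] with u h1 h2
    exact key u ⟨h2.le, h1⟩
  have := le_of_tendsto_of_tendsto hlim1 hlim2 hev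
  calc |h t - (t₀ - t)| = |0 + t₀ - (h t + t)| := by rw [abs_sub_comm]; ring_nf
    _ ≤ ε * (t₀ - t) := this

set_option maxHeartbeats 1000000 in
theorem stmt_18 (M₀ t₁ t₀ : ℝ) (hM₀ : 0 < M₀) (ht : t₁ < t₀)
    (r R r' R' : ℝ → ℝ)
    (hrmem : ∀ t ∈ Ico t₁ t₀, r t ∈ Ioo (0:ℝ) 1)
    (hRmem : ∀ t ∈ Ico t₁ t₀, R t ∈ Ioo (0:ℝ) 1)
    (hr' : ∀ t ∈ Ico t₁ t₀, HasDerivAt r (r' t) t)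
    (hR' : ∀ t ∈ Ico t₁ t₀, HasDerivAt R (R' t) t)
    (hr'c : ContinuousOn r' (Ico t₁ t₀)) (hR'c : ContinuousOn R' (Ico t₁ t₀))
    (hr0 : Tendsto r (nhdsWithin t₀ (Iio t₀)) (nhds 0))
    (hR0 : Tendsto R (nhdsWithin t₀ (Iio t₀)) (nhds 0))
    (hras : Tendsto (fun t => r' t / (-(Real.sqrt (-2 * M₀ * Real.log (r t)))))
      (nhdsWithin t₀ (Iio t₀)) (nhds 1))
    (hRas : Tendsto (fun t => R' t / (-(Real.sqrt (-2 * M₀ * Real.log (R t)))))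
      (nhdsWithin t₀ (Iio t₀)) (nhds 1))
    (hmono : ∃ t₂ ∈ Ico t₁ t₀, StrictAntiOn r (Ico t₂ t₀) ∧ StrictAntiOn R (Ico t₂ t₀)) :
    Tendsto (fun t => r t / R t) (nhdsWithin t₀ (Iio t₀)) (nhds 1) := by
  set l := nhdsWithin t₀ (Iio t₀) with hl
  have hIco : ∀ᶠ t in l, t ∈ Ico t₁ t₀ := by
    filter_upwards [eventually_mem_nhdsWithin,
      (eventually_gt_nhds ht).filter_mono nhdsWithin_le_nhds] with t h1 h2
    exact ⟨h2.le, h1⟩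
  have hghalf : 0 < gfun M₀ (1/2 : ℝ) := gfun_pos hM₀ (by norm_num) (by norm_num)
  -- limits of Psi ∘ r, Psi ∘ R
  have hPsi0 : ∀ (f : ℝ → ℝ), (∀ t ∈ Ico t₁ t₀, f t ∈ Ioo (0:ℝ) 1) →
      Tendsto f l (nhds 0) → Tendsto (fun t => Psi M₀ (f t)) l (nhds 0) := by
    intro f hfm hf0
    have hsmall : ∀ᶠ t in l, f t < 1/2 :=
      hf0.eventually (eventually_lt_nhds (by norm_num))
    apply squeeze_zero'
    · filter_upwards [hIco] with t htm
      exact Psi_nonneg (hfm t htm).1.le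
    · filter_upwards [hIco, hsmall] with t htm hsm
      have h0 : 0 < f t := (hfm t htm).1
      calc Psi M₀ (f t) ≤ f t * (1 / gfun M₀ (f t)) := Psi_le hM₀ h0 (hfm t htm).2
        _ ≤ f t * (1 / gfun M₀ (1/2 : ℝ)) := by
            apply mul_le_mul_of_nonneg_left _ h0.le
            exact inv_gfun_le hM₀ h0 hsm.le (by norm_num)
    · simpa using hf0.mul_const (1 / gfun M₀ (1/2 : ℝ))
  -- derivatives of Psi ∘ r, Psi ∘ R
  have hder : ∀ (f f' : ℝ → ℝ), (∀ t ∈ Ico t₁ t₀, f t ∈ Ioo (0:ℝ) 1) →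
      (∀ t ∈ Ico t₁ t₀, HasDerivAt f (f' t) t) →
      ∀ t ∈ Ico t₁ t₀, HasDerivAt (fun u => Psi M₀ (f u)) ((1 / gfun M₀ (f t)) * f' t) t := by
    intro f f' hfm hf' t htm
    exact (Psi_hasDerivAt hM₀ (hfm t htm).1 (hfm t htm).2).comp t (hf' t htm)
  -- derivative expressions tend to -1
  have hdl : ∀ (f f' : ℝ → ℝ),
      Tendsto (fun t => f' t / (-(Real.sqrt (-2 * M₀ * Real.log (f t))))) l (nhds 1) →
      Tendsto (fun t => (1 / gfun M₀ (f t)) * f' t) l (nhds (-1)) := by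
    intro f f' hfas
    have heq : ∀ t, (1 / gfun M₀ (f t)) * f' t
        = -(f' t / (-(Real.sqrt (-2 * M₀ * Real.log (f t))))) := by
      intro t
      rw [div_neg, neg_neg, one_div, inv_mul_eq_div]
      rfl
    simp only [heq]
    simpa using hfas.neg
  have hrd := hdl r r' hras
  have hRd := hdl R R' hRas
  rw [Metric.tendsto_nhds]
  intro ε hε
  set e := min ε 1 / 2 with he
  have he0 : 0 < e := by positivity
  have he1 : e ≤ 1/2 := by
    have := min_le_right ε 1
    simp only [he]
    linarith
  have heε : e < ε := by
    have := min_le_left ε 1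
    simp only [he]
    linarith
  set d := e / 3 with hd
  have hd0 : 0 < d := by positivity
  -- collect eventual facts
  have hEr : ∀ᶠ t in l, |(1 / gfun M₀ (r t)) * r' t + 1| ≤ d := by
    have := Metric.tendsto_nhds.mp hrd d hd0
    filter_upwards [this] with t h
    rw [Real.dist_eq, sub_neg_eq_add] at h
    exact h.le
  have hER : ∀ᶠ t in l, |(1 / gfun M₀ (R t)) * R' t + 1| ≤ d := by
    have := Metric.tendsto_nhds.mp hRd d hd0
    filter_upwards [this] with t h
    rw [Real.dist_eq, sub_neg_eq_add] at h
    exact h.le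
  have hrsmall : ∀ᶠ t in l, r t < 1/2 := hr0.eventually (eventually_lt_nhds (by norm_num))
  have hRsmall : ∀ᶠ t in l, R t < 1/2 := hR0.eventually (eventually_lt_nhds (by norm_num))
  have hall : ∀ᶠ t in l, t ∈ Ico t₁ t₀ ∧ |(1 / gfun M₀ (r t)) * r' t + 1| ≤ d ∧
      |(1 / gfun M₀ (R t)) * R' t + 1| ≤ d ∧ r t < 1/2 ∧ R t < 1/2 := by
    filter_upwards [hIco, hEr, hER, hrsmall, hRsmall] with t a b c dd ee
    exact ⟨a, b, c, dd, ee⟩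
  rw [hl, Filter.eventually_iff, mem_nhdsLT_iff_exists_Ioo_subset] at hall
  obtain ⟨c, hc, hcsub⟩ := hall
  set s := (max c t₁ + t₀) / 2 with hs
  have hct₀ : c < t₀ := hc
  have hmax : max c t₁ < t₀ := max_lt hct₀ ht
  have hs1 : max c t₁ < s := by simp only [hs]; linarith
  have hs2 : s < t₀ := by simp only [hs]; linarith
  have hsub : Ico s t₀ ⊆ Ioo c t₀ := fun z hz =>
    ⟨lt_of_le_of_lt (le_max_left c t₁) (lt_of_lt_of_le hs1 hz.1), hz.2⟩
  have hprop : ∀ t ∈ Ico s t₀, t ∈ Ico t₁ t₀ ∧ |(1 / gfun M₀ (r t)) * r' t + 1| ≤ d ∧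
      |(1 / gfun M₀ (R t)) * R' t + 1| ≤ d ∧ r t < 1/2 ∧ R t < 1/2 :=
    fun t htm => hcsub (hsub htm)
  -- apply sandwich to both
  have hsr := sandwich (h := fun u => Psi M₀ (r u)) (h' := fun t => (1 / gfun M₀ (r t)) * r' t)
    (fun t htm => hder r r' hrmem hr' t (hprop t htm).1)
    (fun t htm => (hprop t htm).2.1)
    (hPsi0 r hrmem hr0)
  have hsR := sandwich (h := fun u => Psi M₀ (R u)) (h' := fun t => (1 / gfun M₀ (R t)) * R' t)
    (fun t htm => hder R R' hRmem hR' t (hprop t htm).1)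
    (fun t htm => (hprop t htm).2.2.1)
    (hPsi0 R hRmem hR0)
  -- final: eventually t ∈ Ico s t₀ and conclude
  have hevs : ∀ᶠ t in l, t ∈ Ico s t₀ := by
    filter_upwards [eventually_mem_nhdsWithin,
      (eventually_gt_nhds hs2).filter_mono nhdsWithin_le_nhds] with t h1 h2
    exact ⟨h2.le, h1⟩
  filter_upwards [hevs] with t htm
  obtain ⟨htI, _, _, hrs, hRs⟩ := hprop t htm
  have hr1 := hrmem t htI
  have hR1 := hRmem t htI
  have hτ : 0 < t₀ - t := sub_pos.2 htm.2
  have hA1 := hsr t htm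
  have hA2 := hsR t htm
  rw [abs_le] at hA1 hA2
  -- key comparisons
  have hcomp : ∀ (a b : ℝ), 0 < a → 0 < b → a < 1/2 → b < 1/2 → a < 1 →
      Psi M₀ a ≤ (1 + d) * (t₀ - t) → (1 - d) * (t₀ - t) ≤ Psi M₀ b →
      a ≤ (1 + e) * b := by
    intro a b ha hb has hbs ha1 hPa hPb
    by_contra hcon
    push_neg at hcon
    have h1eb : (1 + e) * b < 1 := by nlinarith
    have hmul := Psi_mul hM₀ hb he0 h1eb
    have hsm := Psi_strictMono hM₀ (by positivity : (0:ℝ) < (1 + e) * b) hcon ha1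
    have hkey : (1 + d) * (t₀ - t) < (1 + e) * ((1 - d) * (t₀ - t)) := by
      have : (1 + d) < (1 + e) * (1 - d) := by
        simp only [hd]
        nlinarith [he0, he1]
      nlinarith
    have hPb' : (1 + e) * ((1 - d) * (t₀ - t)) ≤ (1 + e) * Psi M₀ b := by nlinarith
    linarith
  have hrR : r t ≤ (1 + e) * R t :=
    hcomp (r t) (R t) hr1.1 hR1.1 hrs hRs hr1.2 (by linarith [hA1.2]) (by linarith [hA2.1])
  have hRr : R t ≤ (1 + e) * r t :=
    hcomp (R t) (r t) hR1.1 hr1.1 hRs hrs hR1.2 (by linarith [hA2.2]) (by linarith [hA1.1])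
  rw [Real.dist_eq, abs_sub_lt_iff]
  constructor
  · -- r/R - 1 < ε
    have : r t / R t ≤ 1 + e := by
      rw [div_le_iff₀ hR1.1]
      linarith [hrR]
    linarith
  · -- 1 - r/R < ε
    have : 1 - e ≤ r t / R t := by
      rw [le_div_iff₀ hR1.1]
      nlinarith [hRr, hr1.1]
    linarith
end
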